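/- Let g(x) = 1/(1+x) − 1/(2+x) + 1/(3−x). Then for all x ∈ (0,1): g(V₁x)·|V₁'(x)| + g(V₂x)·|V₂'(x)| + g(V₃x)·|V₃'(x)| + g(V₄x)·|V₄'(x)| = g(x), where V₁x = (3+6x)/(11+7x), V₂x = 3x/(15−4x), V₃x = (4+5x)/(5+4x), V₄x = (3+x)/(6−x). -/

import Mathlib

set_option maxHeartbeats 1000000


theorem stmt_16
    (g : ℝ → ℝ) (hg : ∀ x, g x = 1/(1+x) - 1/(2+x) + 1/(3-x))
    (V1 V2 V3 V4 : ℝ → ℝ)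
    (hV1 : ∀ x, V1 x = (3+6*x)/(11+7*x))
    (hV2 : ∀ x, V2 x = 3*x/(15-4*x))
    (hV3 : ∀ x, V3 x = (4+5*x)/(5+4*x))
    (hV4 : ∀ x, V4 x = (3+x)/(6-x)) :
    ∀ x ∈ Set.Ioo (0:ℝ) 1,
      g (V1 x) * |deriv V1 x| + g (V2 x) * |deriv V2 x| +
      g (V3 x) * |deriv V3 x| + g (V4 x) * |deriv V4 x| = g x := by
  intro x hx
  obtain ⟨hx0, hx1⟩ := hx
  have d1 : (11+7*x) ≠ 0 := by nlinarith
  have d2 : (15-4*x) ≠ 0 := by nlinarith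
  have d3 : (5+4*x) ≠ 0 := by nlinarith
  have d4 : (6-x) ≠ 0 := by nlinarith
  have e1 : V1 = fun x => (3+6*x)/(11+7*x) := funext hV1
  have e2 : V2 = fun x => 3*x/(15-4*x) := funext hV2
  have e3 : V3 = fun x => (4+5*x)/(5+4*x) := funext hV3
  have e4 : V4 = fun x => (3+x)/(6-x) := funext hV4
  have h1 : HasDerivAt V1 (45/(11+7*x)^2) x := by
    rw [e1]
    have h := ((hasDerivAt_const x (3:ℝ)).add ((hasDerivAt_id x).const_mul 6)).div
      ((hasDerivAt_const x (11:ℝ)).add ((hasDerivAt_id x).const_mul 7)) d1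
    convert h using 1
    · rfl
    · rfl
    · rfl
    · simp only [Pi.add_apply, Pi.sub_apply, id]
      ring
  have h2 : HasDerivAt V2 (45/(15-4*x)^2) x := by
    rw [e2]
    have h := ((hasDerivAt_id x).const_mul 3).div
      ((hasDerivAt_const x (15:ℝ)).sub ((hasDerivAt_id x).const_mul 4)) d2
    convert h using 1
    · rfl
    · rfl
    · rfl
    · simp only [Pi.add_apply, Pi.sub_apply, id]
      ring
  have h3 : HasDerivAt V3 (9/(5+4*x)^2) x := by
    rw [e3]
    have h := ((hasDerivAt_const x (4:ℝ)).add ((hasDerivAt_id x).const_mul 5)).div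
      ((hasDerivAt_const x (5:ℝ)).add ((hasDerivAt_id x).const_mul 4)) d3
    convert h using 1
    · rfl
    · rfl
    · rfl
    · simp only [Pi.add_apply, Pi.sub_apply, id]
      ring
  have h4 : HasDerivAt V4 (9/(6-x)^2) x := by
    rw [e4]
    have h := ((hasDerivAt_const x (3:ℝ)).add (hasDerivAt_id x)).div
      ((hasDerivAt_const x (6:ℝ)).sub (hasDerivAt_id x)) d4
    convert h using 1
    · rfl
    · rfl
    · rfl
    · simp only [Pi.add_apply, Pi.sub_apply, id]
      ring
  rw [h1.deriv, h2.deriv, h3.deriv, h4.deriv]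
  rw [abs_of_nonneg (by positivity), abs_of_nonneg (by positivity),
      abs_of_nonneg (by positivity), abs_of_nonneg (by positivity)]
  rw [hg, hg, hg, hg, hg, hV1, hV2, hV3, hV4]
  have a1 : 1 + (3+6*x)/(11+7*x) = (14+13*x)/(11+7*x) := by field_simp; ring
  have a2 : 2 + (3+6*x)/(11+7*x) = (25+20*x)/(11+7*x) := by field_simp; ring
  have a3 : 3 - (3+6*x)/(11+7*x) = (30+15*x)/(11+7*x) := by field_simp; ring
  have b1 : 1 + 3*x/(15-4*x) = (15-x)/(15-4*x) := by rw [eq_div_iff d2, add_mul, div_mul_cancel₀ _ d2]; ring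
  have b2 : 2 + 3*x/(15-4*x) = (30-5*x)/(15-4*x) := by rw [eq_div_iff d2, add_mul, div_mul_cancel₀ _ d2]; ring
  have b3 : 3 - 3*x/(15-4*x) = (45-15*x)/(15-4*x) := by rw [eq_div_iff d2, sub_mul, div_mul_cancel₀ _ d2]; ring
  have c1 : 1 + (4+5*x)/(5+4*x) = (9+9*x)/(5+4*x) := by field_simp; ring
  have c2 : 2 + (4+5*x)/(5+4*x) = (14+13*x)/(5+4*x) := by field_simp; ring
  have c3 : 3 - (4+5*x)/(5+4*x) = (11+7*x)/(5+4*x) := by field_simp; ring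
  have f1 : 1 + (3+x)/(6-x) = (9)/(6-x) := by field_simp; ring
  have f2 : 2 + (3+x)/(6-x) = (15-x)/(6-x) := by field_simp; ring
  have f3 : 3 - (3+x)/(6-x) = (15-4*x)/(6-x) := by field_simp; ring
  rw [a1, a2, a3, b1, b2, b3, c1, c2, c3, f1, f2, f3]
  have n1 : (14+13*x) ≠ 0 := by nlinarith
  have n2 : (25+20*x) ≠ 0 := by nlinarith
  have n3 : (30+15*x) ≠ 0 := by nlinarith
  have n4 : (15-x) ≠ 0 := by nlinarith
  have n5 : (30-5*x) ≠ 0 := by nlinarith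
  have n6 : (45-15*x) ≠ 0 := by nlinarith
  have n7 : (9+9*x) ≠ 0 := by nlinarith
  have n8 : (1+x) ≠ 0 := by nlinarith
  have n9 : (2+x) ≠ 0 := by nlinarith
  have n10 : (3-x) ≠ 0 := by nlinarith
  simp only [one_div_div]
  have m2 : 15 - x*4 ≠ 0 := by nlinarith
  have m5 : 30 - x*5 ≠ 0 := by nlinarith
  have m6 : 45 - x*15 ≠ 0 := by nlinarith
  field_simp
  ring
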